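/- Let A, Â, Σ, Σ̂ be d×d real matrices and ‖·‖ a sub-multiplicative matrix norm with C_A := Σ_{j≥0}‖A^j‖² < ∞, C_{Aᵀ} := Σ_{j≥0}‖(A^j)ᵀ‖² < ∞, C_Â := Σ_{j≥0}‖Â^j‖² < ∞, C_{Âᵀ} := Σ_{j≥0}‖(Â^j)ᵀ‖² < ∞, and C_Σ := ‖Σ‖. Define Γ = Σ_{j=0}^∞ A^j Σ (A^j)ᵀ and Γ̂ = Σ_{j=0}^∞ Â^j Σ̂ (Â^j)ᵀ (assuming both series converge). Then ‖Γ̂ − Γ‖ ≤ ‖Â − A‖ C_Σ (C_Â + C_{Aᵀ})(C_A + C_{Aᵀ})/4 + ‖Σ̂ − Σ‖ (C_Â + C_{Aᵀ})/2 + ‖Âᵀ − Aᵀ‖ (C_Σ + ‖Σ̂ − Σ‖)(C_Â + C_{Aᵀ})(C_Â + C_{Âᵀ})/4. -/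

import Mathlib

open Finset

section helpers

attribute [local instance] Matrix.normedAddCommGroup

lemma amgm4 (a b c e : ℝ) (hc : 0 ≤ c) (he : 0 ≤ e) :
    a * b * (c * e) ≤ (a^2 + b^2)/2 * ((c^2 + e^2)/2) := by
  have h1 : a * b ≤ (a^2 + b^2)/2 := by nlinarith [sq_nonneg (a-b)]
  have h2 : c * e ≤ (c^2 + e^2)/2 := by nlinarith [sq_nonneg (c-e)]
  exact mul_le_mul h1 h2 (mul_nonneg hc he) (by positivity)

lemma telescope {R : Type*} [Ring R] (x y : R) (n : ℕ) :
    x^n - y^n = ∑ i ∈ range n, x^i * (x-y) * y^(n-1-i) := by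
  induction n with
  | zero => simp
  | succ n ih =>
    rw [Finset.sum_range_succ']
    have h1 : ∀ i ∈ range n, x^(i+1) * (x-y) * y^(n+1-1-(i+1)) =
        x * (x^i * (x-y) * y^(n-1-i)) := by
      intro i _
      have : n+1-1-(i+1) = n-1-i := by omega
      rw [this, pow_succ', mul_assoc, mul_assoc, mul_assoc]
    rw [Finset.sum_congr rfl h1, ← Finset.mul_sum, ← ih]
    simp only [pow_zero, one_mul, Nat.add_sub_cancel, Nat.sub_zero]
    rw [mul_sub, sub_mul, ← pow_succ', ← pow_succ']
    abel

variable {d : ℕ} (N : Matrix (Fin d) (Fin d) ℝ → ℝ)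
  (hN_nonneg : ∀ M, 0 ≤ N M)
  (hN_add : ∀ M₁ M₂, N (M₁ + M₂) ≤ N M₁ + N M₂)
  (hN_smul : ∀ (c : ℝ) M, N (c • M) = |c| * N M)
  (hN_mul : ∀ M₁ M₂, N (M₁ * M₂) ≤ N M₁ * N M₂)

include hN_smul in
lemma N_zero : N 0 = 0 := by
  have := hN_smul 0 0
  simpa using this

include hN_add hN_smul in
lemma N_sum {ι : Type*} (F : Finset ι) (f : ι → Matrix (Fin d) (Fin d) ℝ) :
    N (∑ i ∈ F, f i) ≤ ∑ i ∈ F, N (f i) := by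
  classical
  induction F using Finset.cons_induction with
  | empty => simp [N_zero N hN_smul]
  | cons a F ha ih =>
    rw [Finset.sum_cons, Finset.sum_cons]
    exact (hN_add _ _).trans (add_le_add_right ih _)

include hN_nonneg hN_add hN_smul in
lemma N_bound : ∃ C : ℝ, 0 ≤ C ∧ ∀ M, N M ≤ C * ‖M‖ := by
  classical
  refine ⟨∑ i : Fin d, ∑ j : Fin d, N (Matrix.single i j 1), ?_, ?_⟩
  · exact Finset.sum_nonneg fun i _ => Finset.sum_nonneg fun j _ => hN_nonneg _
  intro M
  have hM := Matrix.matrix_eq_sum_single M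
  calc N M = N (∑ i : Fin d, ∑ j : Fin d, Matrix.single i j (M i j)) := by rw [← hM]
    _ ≤ ∑ i : Fin d, N (∑ j : Fin d, Matrix.single i j (M i j)) :=
        N_sum N hN_add hN_smul _ _
    _ ≤ ∑ i : Fin d, ∑ j : Fin d, N (Matrix.single i j (M i j)) :=
        Finset.sum_le_sum fun i _ => N_sum N hN_add hN_smul _ _
    _ ≤ ∑ i : Fin d, ∑ j : Fin d, N (Matrix.single i j 1) * ‖M‖ := by
        refine Finset.sum_le_sum fun i _ => Finset.sum_le_sum fun j _ => ?_
        have h1 : Matrix.single i j (M i j) = (M i j) • Matrix.single i j 1 := by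
          ext a b; simp [Matrix.single]
        rw [h1, hN_smul]
        have := Matrix.norm_entry_le_entrywise_sup_norm M (i := i) (j := j)
        calc |M i j| * N (Matrix.single i j 1)
            ≤ ‖M‖ * N (Matrix.single i j 1) :=
              mul_le_mul_of_nonneg_right (by simpa [Real.norm_eq_abs] using this) (hN_nonneg _)
          _ = N (Matrix.single i j 1) * ‖M‖ := mul_comm _ _
    _ = (∑ i : Fin d, ∑ j : Fin d, N (Matrix.single i j 1)) * ‖M‖ := by
        rw [Finset.sum_mul]; exact Finset.sum_congr rfl fun i _ => (Finset.sum_mul _ _ _).symm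

include hN_nonneg hN_add hN_smul in
lemma N_continuous : Continuous N := by
  obtain ⟨C, hC0, hC⟩ := N_bound N hN_nonneg hN_add hN_smul
  have hlip : ∀ X Y, |N X - N Y| ≤ C * ‖X - Y‖ := by
    intro X Y
    have hXY : N X - N Y ≤ N (X - Y) := by
      have := hN_add (X - Y) Y
      simp only [sub_add_cancel] at this
      linarith
    have hYX : N Y - N X ≤ N (X - Y) := by
      have := hN_add (Y - X) X
      simp only [sub_add_cancel] at this
      have hneg : N (Y - X) = N (X - Y) := by
        have := hN_smul (-1) (X - Y)
        simpa [neg_sub] using this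
      linarith [hneg ▸ this]
    have := hC (X - Y)
    rw [abs_le]; constructor <;> linarith [abs_nonneg (N X - N Y)]
  refine Metric.continuous_iff.mpr ?_
  intro X ε hε
  refine ⟨ε / (C + 1), by positivity, fun Y hY => ?_⟩
  have h1 := hlip Y X
  have h3 : ‖Y - X‖ = dist Y X := (dist_eq_norm _ _).symm
  rw [Real.dist_eq]
  calc |N Y - N X| ≤ C * dist Y X := by rw [← h3]; exact h1
    _ ≤ C * (ε / (C+1)) := mul_le_mul_of_nonneg_left (le_of_lt hY) hC0
    _ < ε := by
        rw [mul_div_assoc', div_lt_iff₀ (by linarith)]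
        nlinarith

include hN_nonneg hN_add hN_smul in
lemma N_key (f : ℕ → Matrix (Fin d) (Fin d) ℝ) (x : Matrix (Fin d) (Fin d) ℝ) (g : ℕ → ℝ)
    (hfx : HasSum f x) (hfg : ∀ j, N (f j) ≤ g j) (hg : Summable g) :
    N x ≤ ∑' j, g j := by
  have hcont := N_continuous N hN_nonneg hN_add hN_smul
  have ht : Filter.Tendsto (fun F : Finset ℕ => N (∑ i ∈ F, f i)) Filter.atTop (nhds (N x)) :=
    (hcont.tendsto x).comp hfx
  refine le_of_tendsto ht (Filter.Eventually.of_forall fun F => ?_)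
  calc N (∑ i ∈ F, f i) ≤ ∑ i ∈ F, N (f i) := N_sum N hN_add hN_smul _ _
    _ ≤ ∑ i ∈ F, g i := Finset.sum_le_sum fun i _ => hfg i
    _ ≤ ∑' i, g i := hg.sum_le_tsum F (fun i _ => le_trans (hN_nonneg _) (hfg i))

include hN_nonneg hN_mul in
lemma N_mul3 (X1 X2 X3 : Matrix (Fin d) (Fin d) ℝ) :
    N (X1 * X2 * X3) ≤ N X1 * N X2 * N X3 :=
  (hN_mul _ _).trans (mul_le_mul_of_nonneg_right (hN_mul _ _) (hN_nonneg _))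

include hN_nonneg hN_mul in
lemma N_mul6 (X1 X2 X3 X4 X5 X6 : Matrix (Fin d) (Fin d) ℝ) :
    N (X1 * X2 * X3 * X4 * (X5 * X6)) ≤ N X1 * N X2 * N X3 * N X4 * N X5 * N X6 := by
  have h4 : N (X1 * X2 * X3 * X4) ≤ N X1 * N X2 * N X3 * N X4 :=
    (hN_mul _ _).trans (mul_le_mul_of_nonneg_right
      (N_mul3 N hN_nonneg hN_mul X1 X2 X3) (hN_nonneg _))
  have h56 : N (X5 * X6) ≤ N X5 * N X6 := hN_mul _ _
  calc N (X1 * X2 * X3 * X4 * (X5 * X6)) ≤ N (X1 * X2 * X3 * X4) * N (X5 * X6) := hN_mul _ _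
    _ ≤ (N X1 * N X2 * N X3 * N X4) * (N X5 * N X6) :=
        mul_le_mul h4 h56 (hN_nonneg _)
          (mul_nonneg (mul_nonneg (mul_nonneg (hN_nonneg _) (hN_nonneg _)) (hN_nonneg _))
            (hN_nonneg _))
    _ = N X1 * N X2 * N X3 * N X4 * N X5 * N X6 := by ring

end helpers

section bounds

noncomputable def u1f {d : ℕ} (N : Matrix (Fin d) (Fin d) ℝ → ℝ) (A Ahat : Matrix (Fin d) (Fin d) ℝ) : ℕ → ℝ :=
  fun i => (N (Ahat^i)^2 + N ((A^(i+1)).transpose)^2)/2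

noncomputable def v1f {d : ℕ} (N : Matrix (Fin d) (Fin d) ℝ → ℝ) (A : Matrix (Fin d) (Fin d) ℝ) : ℕ → ℝ :=
  fun k => (N (A^k)^2 + N ((A^k).transpose)^2)/2

noncomputable def u3f {d : ℕ} (N : Matrix (Fin d) (Fin d) ℝ → ℝ) (Ahat : Matrix (Fin d) (Fin d) ℝ) : ℕ → ℝ :=
  fun i => (N (Ahat^i)^2 + N ((Ahat^i).transpose)^2)/2

noncomputable def v3f {d : ℕ} (N : Matrix (Fin d) (Fin d) ℝ → ℝ) (A Ahat : Matrix (Fin d) (Fin d) ℝ) : ℕ → ℝ :=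
  fun k => (N (Ahat^(k+1))^2 + N ((A^k).transpose)^2)/2

variable {d : ℕ} (N : Matrix (Fin d) (Fin d) ℝ → ℝ)
  (hN_nonneg : ∀ M, 0 ≤ N M)
  (hN_add : ∀ M₁ M₂, N (M₁ + M₂) ≤ N M₁ + N M₂)
  (hN_smul : ∀ (c : ℝ) M, N (c • M) = |c| * N M)
  (hN_mul : ∀ M₁ M₂, N (M₁ * M₂) ≤ N M₁ * N M₂)
  (A Ahat S Shat : Matrix (Fin d) (Fin d) ℝ)

include hN_nonneg hN_add hN_smul hN_mul in
lemma bound1 (s : ℕ) :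
    N ((Ahat^s - A^s) * S * (A^s).transpose) ≤
      N (Ahat - A) * N S * ∑ i ∈ range s, u1f N A Ahat i * v1f N A (s-1-i) := by
  rw [telescope Ahat A s, Finset.sum_mul, Finset.sum_mul, Finset.mul_sum]
  refine (N_sum N hN_add hN_smul _ _).trans (Finset.sum_le_sum fun i hi => ?_)
  rw [Finset.mem_range] at hi
  have hsplit : (A^s).transpose = (A^(i+1)).transpose * (A^(s-1-i)).transpose := by
    have hs2 : s - 1 - i + (i + 1) = s := by omega
    rw [show (A^s) = A^(s-1-i) * A^(i+1) by rw [← pow_add, hs2], Matrix.transpose_mul]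
  rw [hsplit]
  refine (N_mul6 N hN_nonneg hN_mul _ _ _ _ _ _).trans ?_
  simp only [u1f, v1f]
  calc N (Ahat^i) * N (Ahat - A) * N (A^(s-1-i)) * N S * N ((A^(i+1)).transpose) *
        N ((A^(s-1-i)).transpose)
      = (N (Ahat - A) * N S) * (N (Ahat^i) * N ((A^(i+1)).transpose) *
          (N (A^(s-1-i)) * N ((A^(s-1-i)).transpose))) := by ring
    _ ≤ (N (Ahat - A) * N S) *
          ((N (Ahat^i)^2 + N ((A^(i+1)).transpose)^2)/2 *
            ((N (A^(s-1-i))^2 + N ((A^(s-1-i)).transpose)^2)/2)) :=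
        mul_le_mul_of_nonneg_left
          (amgm4 _ _ _ _ (hN_nonneg _) (hN_nonneg _))
          (mul_nonneg (hN_nonneg _) (hN_nonneg _))
    _ = N (Ahat - A) * N S *
          ((N (Ahat^i)^2 + N ((A^(i+1)).transpose)^2)/2 *
            ((N (A^(s-1-i))^2 + N ((A^(s-1-i)).transpose)^2)/2)) := by ring

include hN_nonneg hN_mul in
lemma bound2 (s : ℕ) :
    N (Ahat^s * (Shat - S) * (A^s).transpose) ≤
      N (Shat - S) * ((N (Ahat^s)^2 + N ((A^s).transpose)^2)/2) := by
  refine (N_mul3 N hN_nonneg hN_mul _ _ _).trans ?_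
  nlinarith [mul_nonneg (hN_nonneg (Shat - S)) (sq_nonneg (N (Ahat^s) - N ((A^s).transpose))),
    hN_nonneg (Ahat^s), hN_nonneg ((A^s).transpose), hN_nonneg (Shat - S)]

include hN_nonneg hN_add hN_smul hN_mul in
lemma bound3 (s : ℕ) :
    N (Ahat^s * Shat * ((Ahat^s).transpose - (A^s).transpose)) ≤
      N (Ahat.transpose - A.transpose) * (N S + N (Shat - S)) *
        ∑ i ∈ range s, u3f N Ahat i * v3f N A Ahat (s-1-i) := by
  have htr : (Ahat^s).transpose - (A^s).transpose =
      ∑ i ∈ range s, (A^(s-1-i)).transpose *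
        ((Ahat.transpose - A.transpose) * (Ahat^i).transpose) := by
    rw [← Matrix.transpose_sub, telescope Ahat A s, Matrix.transpose_sum]
    exact Finset.sum_congr rfl fun i _ => by
      simp [Matrix.transpose_mul, Matrix.transpose_sub]
  rw [htr, Finset.mul_sum, Finset.mul_sum]
  refine (N_sum N hN_add hN_smul _ _).trans (Finset.sum_le_sum fun i hi => ?_)
  rw [Finset.mem_range] at hi
  have hS : N Shat ≤ N S + N (Shat - S) := by
    have h0 : S + (Shat - S) = Shat := by abel
    calc N Shat = N (S + (Shat - S)) := by rw [h0]
      _ ≤ N S + N (Shat - S) := hN_add _ _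
  have heq : Ahat^s * Shat * ((A^(s-1-i)).transpose *
        ((Ahat.transpose - A.transpose) * (Ahat^i).transpose))
      = Ahat^i * Ahat^(s-1-i+1) * Shat * (A^(s-1-i)).transpose *
          ((Ahat.transpose - A.transpose) * (Ahat^i).transpose) := by
    have hsplit : Ahat^s = Ahat^i * Ahat^(s-1-i+1) := by
      rw [← pow_add]; congr 1; omega
    rw [hsplit]; simp only [mul_assoc]
  rw [heq]
  refine (N_mul6 N hN_nonneg hN_mul _ _ _ _ _ _).trans ?_
  simp only [u3f, v3f]
  calc N (Ahat^i) * N (Ahat^(s-1-i+1)) * N Shat * N ((A^(s-1-i)).transpose) *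
        N (Ahat.transpose - A.transpose) * N ((Ahat^i).transpose)
      = (N Shat * N (Ahat.transpose - A.transpose)) *
          (N (Ahat^i) * N ((Ahat^i).transpose) *
            (N (Ahat^(s-1-i+1)) * N ((A^(s-1-i)).transpose))) := by ring
    _ ≤ ((N S + N (Shat - S)) * N (Ahat.transpose - A.transpose)) *
          ((N (Ahat^i)^2 + N ((Ahat^i).transpose)^2)/2 *
            ((N (Ahat^(s-1-i+1))^2 + N ((A^(s-1-i)).transpose)^2)/2)) := by
        refine mul_le_mul (mul_le_mul_of_nonneg_right hS (hN_nonneg _))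
          (amgm4 _ _ _ _ (hN_nonneg _) (hN_nonneg _)) ?_ ?_
        · exact mul_nonneg (mul_nonneg (hN_nonneg _) (hN_nonneg _))
            (mul_nonneg (hN_nonneg _) (hN_nonneg _))
        · exact mul_nonneg (add_nonneg (hN_nonneg _) (hN_nonneg _)) (hN_nonneg _)
    _ = N (Ahat.transpose - A.transpose) * (N S + N (Shat - S)) *
          ((N (Ahat^i)^2 + N ((Ahat^i).transpose)^2)/2 *
            ((N (Ahat^(s-1-i+1))^2 + N ((A^(s-1-i)).transpose)^2)/2)) := by ring

end bounds

set_option maxHeartbeats 2000000 in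
/-- error bound for the lag-zero autocovariance
`Γ = Σ_{j≥0} A^j Σ (A^j)ᵀ` of a VAR(1) process, in terms of a
sub-multiplicative matrix norm `N`, with
`C_A = Σ_j N(A^j)², C_{Aᵀ} = Σ_j N((A^j)ᵀ)²`, etc., and `C_Σ = N(Σ)`. -/
theorem autocovariance_error_bound (d : ℕ)
    (N : Matrix (Fin d) (Fin d) ℝ → ℝ)
    (hN_nonneg : ∀ M, 0 ≤ N M)
    (hN_add : ∀ M₁ M₂, N (M₁ + M₂) ≤ N M₁ + N M₂)
    (hN_smul : ∀ (c : ℝ) M, N (c • M) = |c| * N M)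
    (hN_mul : ∀ M₁ M₂, N (M₁ * M₂) ≤ N M₁ * N M₂)
    (A Ahat S Shat : Matrix (Fin d) (Fin d) ℝ)
    (CA CAt CAhat CAhatT : ℝ)
    (hCA : HasSum (fun j : ℕ => N (A ^ j) ^ 2) CA)
    (hCAt : HasSum (fun j : ℕ => N ((A ^ j).transpose) ^ 2) CAt)
    (hCAhat : HasSum (fun j : ℕ => N (Ahat ^ j) ^ 2) CAhat)
    (hCAhatT : HasSum (fun j : ℕ => N ((Ahat ^ j).transpose) ^ 2) CAhatT)
    (Γ Γhat : Matrix (Fin d) (Fin d) ℝ)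
    (hΓ : HasSum (fun j : ℕ => A ^ j * S * (A ^ j).transpose) Γ)
    (hΓhat : HasSum (fun j : ℕ => Ahat ^ j * Shat * (Ahat ^ j).transpose) Γhat) :
    N (Γhat - Γ) ≤
      N (Ahat - A) * N S * (CAhat + CAt) * (CA + CAt) / 4 +
      N (Shat - S) * (CAhat + CAt) / 2 +
      N (Ahat.transpose - A.transpose) * (N S + N (Shat - S)) *
        (CAhat + CAt) * (CAhat + CAhatT) / 4 := by
  classical
  set k1 := N (Ahat - A) * N S with hk1
  set k3 := N (Ahat.transpose - A.transpose) * (N S + N (Shat - S)) with hk3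
  have hk1nn : 0 ≤ k1 := mul_nonneg (hN_nonneg _) (hN_nonneg _)
  have hk3nn : 0 ≤ k3 := mul_nonneg (hN_nonneg _) (add_nonneg (hN_nonneg _) (hN_nonneg _))
  -- the term functions
  set w1 : ℕ → ℝ := fun s => ∑ i ∈ Finset.range s, u1f N A Ahat i * v1f N A (s-1-i) with hw1
  set w3 : ℕ → ℝ := fun s => ∑ i ∈ Finset.range s, u3f N Ahat i * v3f N A Ahat (s-1-i) with hw3
  set v2 : ℕ → ℝ := fun s => (N (Ahat^s)^2 + N ((A^s).transpose)^2)/2 with hv2def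
  set g : ℕ → ℝ := fun s => k1 * w1 s + N (Shat - S) * v2 s + k3 * w3 s with hg
  -- decomposition and termwise bound
  have hfx : HasSum (fun s : ℕ => Ahat ^ s * Shat * (Ahat ^ s).transpose
      - A ^ s * S * (A ^ s).transpose) (Γhat - Γ) := hΓhat.sub hΓ
  have hfg : ∀ s : ℕ, N (Ahat ^ s * Shat * (Ahat ^ s).transpose
      - A ^ s * S * (A ^ s).transpose) ≤ g s := by
    intro s
    have hdecomp : Ahat ^ s * Shat * (Ahat ^ s).transpose - A ^ s * S * (A ^ s).transpose
        = (Ahat^s - A^s) * S * (A^s).transpose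
          + Ahat^s * (Shat - S) * (A^s).transpose
          + Ahat^s * Shat * ((Ahat^s).transpose - (A^s).transpose) := by
      noncomm_ring
    rw [hdecomp]
    have t1 := bound1 N hN_nonneg hN_add hN_smul hN_mul A Ahat S s
    have t2 := bound2 N hN_nonneg hN_mul A Ahat S Shat s
    have t3 := bound3 N hN_nonneg hN_add hN_smul hN_mul A Ahat S Shat s
    calc N ((Ahat^s - A^s) * S * (A^s).transpose
          + Ahat^s * (Shat - S) * (A^s).transpose
          + Ahat^s * Shat * ((Ahat^s).transpose - (A^s).transpose))
        ≤ N ((Ahat^s - A^s) * S * (A^s).transpose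
            + Ahat^s * (Shat - S) * (A^s).transpose)
          + N (Ahat^s * Shat * ((Ahat^s).transpose - (A^s).transpose)) := hN_add _ _
      _ ≤ N ((Ahat^s - A^s) * S * (A^s).transpose)
          + N (Ahat^s * (Shat - S) * (A^s).transpose)
          + N (Ahat^s * Shat * ((Ahat^s).transpose - (A^s).transpose)) :=
          add_le_add_left (hN_add _ _) _
      _ ≤ k1 * w1 s + N (Shat - S) * v2 s + k3 * w3 s :=
          add_le_add (add_le_add t1 t2) t3
  -- nonnegativity of building blocks
  have hu1nn : ∀ i, 0 ≤ u1f N A Ahat i := fun i => by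
    simp only [u1f]; positivity
  have hv1nn : ∀ i, 0 ≤ v1f N A i := fun i => by
    simp only [v1f]; positivity
  have hu3nn : ∀ i, 0 ≤ u3f N Ahat i := fun i => by
    simp only [u3f]; positivity
  have hv3nn : ∀ i, 0 ≤ v3f N A Ahat i := fun i => by
    simp only [v3f]; positivity
  -- summability of shifted series and bounds
  have hshiftA : Summable (fun n : ℕ => N ((A^(n+1)).transpose)^2) :=
    (summable_nat_add_iff 1).mpr hCAt.summable
  have hshiftA_le : ∑' n : ℕ, N ((A^(n+1)).transpose)^2 ≤ CAt := by
    have h0 := Summable.tsum_eq_zero_add hCAt.summable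
    rw [hCAt.tsum_eq] at h0
    nlinarith [sq_nonneg (N ((A^0).transpose))]
  have hshiftAh : Summable (fun n : ℕ => N (Ahat^(n+1))^2) :=
    (summable_nat_add_iff 1).mpr hCAhat.summable
  have hshiftAh_le : ∑' n : ℕ, N (Ahat^(n+1))^2 ≤ CAhat := by
    have h0 := Summable.tsum_eq_zero_add hCAhat.summable
    rw [hCAhat.tsum_eq] at h0
    nlinarith [sq_nonneg (N (Ahat^0))]
  -- HasSum facts for u,v
  have hu1 : HasSum (u1f N A Ahat) ((CAhat + ∑' n : ℕ, N ((A^(n+1)).transpose)^2)/2) :=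
    (hCAhat.add hshiftA.hasSum).div_const 2
  have hv1 : HasSum (v1f N A) ((CA + CAt)/2) := (hCA.add hCAt).div_const 2
  have hu3 : HasSum (u3f N Ahat) ((CAhat + CAhatT)/2) := (hCAhat.add hCAhatT).div_const 2
  have hv3 : HasSum (v3f N A Ahat) (((∑' n : ℕ, N (Ahat^(n+1))^2) + CAt)/2) :=
    (hshiftAh.hasSum.add hCAt).div_const 2
  have hv2sum : HasSum v2 ((CAhat + CAt)/2) := (hCAhat.add hCAt).div_const 2
  -- absolute summability (for Cauchy product)
  have habs : ∀ (h : ℕ → ℝ), (∀ i, 0 ≤ h i) → Summable h → Summable (fun n => ‖h n‖) := by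
    intro h hnn hs
    have : (fun n => ‖h n‖) = h := funext fun n => Real.norm_of_nonneg (hnn n)
    rw [this]; exact hs
  -- Cauchy products
  have hprod1 : HasSum (fun n => ∑ k ∈ Finset.range (n+1), u1f N A Ahat k * v1f N A (n-k))
      ((∑' n, u1f N A Ahat n) * (∑' n, v1f N A n)) :=
    hasSum_sum_range_mul_of_summable_norm
      (habs _ hu1nn hu1.summable) (habs _ hv1nn hv1.summable)
  have hprod3 : HasSum (fun n => ∑ k ∈ Finset.range (n+1), u3f N Ahat k * v3f N A Ahat (n-k))
      ((∑' n, u3f N Ahat n) * (∑' n, v3f N A Ahat n)) :=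
    hasSum_sum_range_mul_of_summable_norm
      (habs _ hu3nn hu3.summable) (habs _ hv3nn hv3.summable)
  -- relate w to the Cauchy product
  have hw1shift : (fun n : ℕ => w1 (n+1))
      = fun n => ∑ k ∈ Finset.range (n+1), u1f N A Ahat k * v1f N A (n-k) := by
    funext n; simp [hw1]
  have hw3shift : (fun n : ℕ => w3 (n+1))
      = fun n => ∑ k ∈ Finset.range (n+1), u3f N Ahat k * v3f N A Ahat (n-k) := by
    funext n; simp [hw3]
  have hw1summ : Summable w1 := by
    refine (summable_nat_add_iff 1).mp ?_
    rw [hw1shift]; exact hprod1.summable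
  have hw3summ : Summable w3 := by
    refine (summable_nat_add_iff 1).mp ?_
    rw [hw3shift]; exact hprod3.summable
  have hw1tsum : ∑' s, w1 s = (∑' n, u1f N A Ahat n) * (∑' n, v1f N A n) := by
    rw [Summable.tsum_eq_zero_add hw1summ]
    have h0 : w1 0 = 0 := by simp [hw1]
    rw [h0, zero_add]
    rw [show (fun n : ℕ => w1 (n+1)) = _ from hw1shift]
    exact hprod1.tsum_eq
  have hw3tsum : ∑' s, w3 s = (∑' n, u3f N Ahat n) * (∑' n, v3f N A Ahat n) := by
    rw [Summable.tsum_eq_zero_add hw3summ]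
    have h0 : w3 0 = 0 := by simp [hw3]
    rw [h0, zero_add]
    rw [show (fun n : ℕ => w3 (n+1)) = _ from hw3shift]
    exact hprod3.tsum_eq
  -- sum of g
  have hgsum : HasSum g (k1 * ∑' s, w1 s + N (Shat - S) * ((CAhat + CAt)/2) + k3 * ∑' s, w3 s) :=
    (((hw1summ.hasSum.mul_left k1).add (hv2sum.mul_left (N (Shat - S)))).add
      (hw3summ.hasSum.mul_left k3))
  -- main comparison
  have hmain := N_key N hN_nonneg hN_add hN_smul _ _ g hfx hfg hgsum.summable
  rw [hgsum.tsum_eq] at hmain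
  refine hmain.trans ?_
  -- final numeric bound
  have hb1 : ∑' s, w1 s ≤ (CAhat + CAt)/2 * ((CA + CAt)/2) := by
    rw [hw1tsum, hu1.tsum_eq, hv1.tsum_eq]
    have h1 : (CAhat + ∑' n : ℕ, N ((A^(n+1)).transpose)^2)/2 ≤ (CAhat + CAt)/2 := by
      linarith [hshiftA_le]
    have h2 : (0:ℝ) ≤ (CA + CAt)/2 := by
      rw [← hv1.tsum_eq]; exact tsum_nonneg hv1nn
    have h3 : (0:ℝ) ≤ (CAhat + ∑' n : ℕ, N ((A^(n+1)).transpose)^2)/2 := by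
      rw [← hu1.tsum_eq]; exact tsum_nonneg hu1nn
    exact mul_le_mul_of_nonneg_right h1 h2
  have hb3 : ∑' s, w3 s ≤ (CAhat + CAhatT)/2 * ((CAhat + CAt)/2) := by
    rw [hw3tsum, hu3.tsum_eq, hv3.tsum_eq]
    have h1 : ((∑' n : ℕ, N (Ahat^(n+1))^2) + CAt)/2 ≤ (CAhat + CAt)/2 := by
      linarith [hshiftAh_le]
    have h3 : (0:ℝ) ≤ (CAhat + CAhatT)/2 := by
      rw [← hu3.tsum_eq]; exact tsum_nonneg hu3nn
    exact mul_le_mul_of_nonneg_left h1 h3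
  have e1 : k1 * ∑' s, w1 s ≤ k1 * ((CAhat + CAt)/2 * ((CA + CAt)/2)) :=
    mul_le_mul_of_nonneg_left hb1 hk1nn
  have e3 : k3 * ∑' s, w3 s ≤ k3 * ((CAhat + CAhatT)/2 * ((CAhat + CAt)/2)) :=
    mul_le_mul_of_nonneg_left hb3 hk3nn
  linarith [e1, e3]
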